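/- Example in ℝ²: let K = [−1,1]×[−α,α] with 0 < α ≤ 2/p for a prime p > 2, Λ = ℤ², Λ₁ = {z ∈ ℤ² : z₂ ≡ 0 mod 2}, Λ₂ = {z ∈ ℤ² : z₁ ≡ 0 mod p}. Then Λ̄ = Λ₁ ∩ Λ₂ = {z ∈ ℤ² : z₂ ≡ 0 mod 2, z₁ ≡ 0 mod p} has det Λ̄ = 2p, λ₁(K,Λ̄) = p, and λ₁(K, Λ∖(Λ₁∪Λ₂)) = 1/α. -/

import Mathlib

open MeasureTheory Set Pointwise

/-- The lattice generated by the vectors `b`. -/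
noncomputable def lat {n : ℕ} (b : Fin n → (Fin n → ℝ)) : Set (Fin n → ℝ) :=
  (Submodule.span ℤ (Set.range b) : Submodule ℤ (Fin n → ℝ))

/-- The determinant (covolume) of the lattice with basis `b`. -/
noncomputable def latDet {n : ℕ} (b : Fin n → (Fin n → ℝ)) : ℝ :=
  |(Matrix.of b).det|

/-- A compact convex `o`-symmetric body with nonempty interior. -/
def IsBody {n : ℕ} (K : Set (Fin n → ℝ)) : Prop :=
  IsCompact K ∧ Convex ℝ K ∧ K = -K ∧ (interior K).Nonempty

/-- First successive minimum of `K` w.r.t. the point set `S`. -/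
noncomputable def lambda1 {n : ℕ} (K S : Set (Fin n → ℝ)) : ℝ :=
  sInf {l : ℝ | 0 ≤ l ∧ ∃ x ∈ S, x ≠ 0 ∧ x ∈ l • K}

/-- First restricted successive minimum: smallest `l ≥ 0` with `l • K ∩ S ≠ ∅`. -/
noncomputable def lambdaRes {n : ℕ} (K S : Set (Fin n → ℝ)) : ℝ :=
  sInf {l : ℝ | 0 ≤ l ∧ (l • K ∩ S).Nonempty}

/-- `i`-th successive minimum of `K` w.r.t. the point set `S`. -/
noncomputable def lambdaI {n : ℕ} (i : ℕ) (K S : Set (Fin n → ℝ)) : ℝ :=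
  sInf {l : ℝ | 0 ≤ l ∧ i ≤ Module.finrank ℝ (Submodule.span ℝ (l • K ∩ S))}

/-- The (half-open) fundamental parallelepiped of the basis `b`. -/
noncomputable def fundPar {n : ℕ} (b : Fin n → (Fin n → ℝ)) : Set (Fin n → ℝ) :=
  {x | ∃ ρ : Fin n → ℝ, (∀ i, 0 ≤ ρ i ∧ ρ i < 1) ∧ x = ∑ i, ρ i • b i}

/-- The covering radius of `K` with respect to the point set `L`. -/
noncomputable def covRadius {n : ℕ} (K L : Set (Fin n → ℝ)) : ℝ :=
  sInf {μ : ℝ | 0 < μ ∧ ∀ t : Fin n → ℝ, (({t} + μ • K) ∩ L).Nonempty}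

lemma memK_aux (α l : ℝ) (hα : 0 ≤ α) (hl : 0 < l) (x : Fin 2 → ℝ) :
    x ∈ l • {y : Fin 2 → ℝ | |y 0| ≤ 1 ∧ |y 1| ≤ α} ↔ |x 0| ≤ l ∧ |x 1| ≤ l * α := by
  constructor
  · rintro ⟨y, ⟨h0, h1⟩, rfl⟩
    simp only [Pi.smul_apply, smul_eq_mul, abs_mul, abs_of_pos hl]
    constructor
    · nlinarith
    · nlinarith
  · rintro ⟨h0, h1⟩
    refine ⟨l⁻¹ • x, ⟨?_, ?_⟩, smul_inv_smul₀ hl.ne' x⟩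
    · simp only [Pi.smul_apply, smul_eq_mul, abs_mul, abs_inv, abs_of_pos hl]
      rw [inv_mul_le_iff₀ hl, mul_one]; exact h0
    · simp only [Pi.smul_apply, smul_eq_mul, abs_mul, abs_inv, abs_of_pos hl]
      rw [inv_mul_le_iff₀ hl]; exact h1

lemma zeroK_aux (α : ℝ) (hα : 0 ≤ α) (x : Fin 2 → ℝ) :
    x ∈ (0:ℝ) • {y : Fin 2 → ℝ | |y 0| ≤ 1 ∧ |y 1| ≤ α} → x = 0 := by
  rintro ⟨y, _, rfl⟩
  simp

/-- the planar example of the paper. -/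
theorem stmt18 (p : ℕ) (hp : p.Prime) (hp2 : 2 < p)
    (α : ℝ) (hα : 0 < α) (hαp : α ≤ 2 / p)
    (K : Set (Fin 2 → ℝ)) (hK : K = {x | |x 0| ≤ 1 ∧ |x 1| ≤ α})
    (L L1 L2 : Set (Fin 2 → ℝ))
    (hL : L = {x | (∃ a : ℤ, x 0 = (a : ℝ)) ∧ (∃ c : ℤ, x 1 = (c : ℝ))})
    (hL1 : L1 = {x ∈ L | ∃ c : ℤ, x 1 = 2 * (c : ℝ)})
    (hL2 : L2 = {x ∈ L | ∃ a : ℤ, x 0 = (p : ℝ) * (a : ℝ)}) :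
    (L1 ∩ L2 = {x ∈ L | (∃ c : ℤ, x 1 = 2 * (c : ℝ)) ∧ ∃ a : ℤ, x 0 = (p : ℝ) * (a : ℝ)}) ∧
      (∃ c : Fin 2 → (Fin 2 → ℝ), LinearIndependent ℝ c ∧ lat c = L1 ∩ L2 ∧
        latDet c = 2 * p) ∧
      lambda1 K (L1 ∩ L2) = p ∧
      lambdaRes K (L \ (L1 ∪ L2)) = 1 / α := by
  have hp0 : (0:ℝ) < p := by exact_mod_cast hp.pos
  have hp3 : (3:ℝ) ≤ p := by exact_mod_cast hp2
  have hpα : (p:ℝ) * α ≤ 2 := by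
    rw [le_div_iff₀ hp0] at hαp; linarith
  have hα1 : α < 1 := by nlinarith
  subst hK hL hL1 hL2
  refine ⟨?_, ?_, ?_, ?_⟩
  · ext x
    simp only [mem_inter_iff, mem_setOf_eq]
    tauto
  · -- the basis
    refine ⟨![![(p:ℝ), 0], ![0, 2]], ?_, ?_, ?_⟩
    · rw [linearIndependent_fin2]
      constructor
      · intro h
        have := congrFun h 1
        simp at this
      · intro a h
        have := congrFun h 0
        simp at this
        exact hp.ne_zero (by exact_mod_cast this.symm)
    · unfold lat
      ext x
      simp only [SetLike.mem_coe, Submodule.mem_span_range_iff_exists_fun ℤ, Fin.sum_univ_two,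
        mem_inter_iff, mem_setOf_eq]
      constructor
      · rintro ⟨f, rfl⟩
        have h0 : (f 0 • (![![(p:ℝ), 0], ![0, 2]] : Fin 2 → Fin 2 → ℝ) 0
            + f 1 • (![![(p:ℝ), 0], ![0, 2]] : Fin 2 → Fin 2 → ℝ) 1) 0 = (p:ℝ) * f 0 := by
          simp [zsmul_eq_mul]; ring
        have h1 : (f 0 • (![![(p:ℝ), 0], ![0, 2]] : Fin 2 → Fin 2 → ℝ) 0
            + f 1 • (![![(p:ℝ), 0], ![0, 2]] : Fin 2 → Fin 2 → ℝ) 1) 1 = 2 * (f 1 : ℝ) := by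
          simp [zsmul_eq_mul]; ring
        refine ⟨⟨⟨⟨(p:ℤ) * f 0, by rw [h0]; push_cast; ring⟩, ⟨2 * f 1, by rw [h1]; push_cast; ring⟩⟩,
          ⟨f 1, h1⟩⟩, ⟨⟨(p:ℤ) * f 0, by rw [h0]; push_cast; ring⟩, ⟨2 * f 1, by rw [h1]; push_cast; ring⟩⟩,
          f 0, h0⟩
      · rintro ⟨⟨_, c, hc⟩, _, a, ha⟩
        refine ⟨![a, c], ?_⟩
        funext i
        fin_cases i
        · simp [zsmul_eq_mul, ha]; ring
        · simp [zsmul_eq_mul, hc]; ring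
    · unfold latDet
      rw [Matrix.det_fin_two]
      norm_num [Matrix.of_apply]
      ring
  · -- lambda1 = p
    unfold lambda1
    have hset : {l : ℝ | 0 ≤ l ∧ ∃ x ∈ ({x ∈ {x : Fin 2 → ℝ | (∃ a : ℤ, x 0 = (a : ℝ)) ∧
        (∃ c : ℤ, x 1 = (c : ℝ))} | ∃ c : ℤ, x 1 = 2 * (c : ℝ)} ∩
        {x ∈ {x : Fin 2 → ℝ | (∃ a : ℤ, x 0 = (a : ℝ)) ∧ (∃ c : ℤ, x 1 = (c : ℝ))} |
        ∃ a : ℤ, x 0 = (p : ℝ) * (a : ℝ)}), x ≠ 0 ∧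
        x ∈ l • {x : Fin 2 → ℝ | |x 0| ≤ 1 ∧ |x 1| ≤ α}} = Set.Ici (p : ℝ) := by
      ext l
      simp only [mem_setOf_eq, mem_Ici, mem_inter_iff]
      constructor
      · rintro ⟨hl0, x, ⟨⟨_, c, hc⟩, _, a, ha⟩, hx0, hxK⟩
        rcases hl0.lt_or_eq with hl | hl
        · rw [memK_aux α l hα.le hl x] at hxK
          obtain ⟨hK0, hK1⟩ := hxK
          rcases eq_or_ne a 0 with rfl | haz
          · have hcz : c ≠ 0 := by
              rintro rfl
              apply hx0
              funext i
              fin_cases i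
              · simpa using ha
              · simpa using hc
            have : (1:ℝ) ≤ |(c:ℝ)| := by
              rw [← Int.cast_abs]; exact_mod_cast Int.one_le_abs hcz
            rw [hc] at hK1
            rw [abs_mul] at hK1
            simp only [abs_two] at hK1
            nlinarith
          · have : (1:ℝ) ≤ |(a:ℝ)| := by
              rw [← Int.cast_abs]; exact_mod_cast Int.one_le_abs haz
            rw [ha, abs_mul, abs_of_pos hp0] at hK0
            nlinarith
        · exfalso
          exact hx0 (zeroK_aux α hα.le x (by rw [← hl] at hxK; exact hxK))
      · intro hl
        have hlp : 0 < l := lt_of_lt_of_le hp0 hl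
        refine ⟨hlp.le, ![(p:ℝ), 0], ⟨⟨⟨⟨(p:ℤ), by simp⟩, ⟨0, by simp⟩⟩, ⟨0, by simp⟩⟩,
          ⟨⟨(p:ℤ), by simp⟩, ⟨0, by simp⟩⟩, ⟨1, by simp⟩⟩, ?_, ?_⟩
        · intro h
          have := congrFun h 0
          simp at this
          exact hp.ne_zero (by exact_mod_cast this)
        · rw [memK_aux α l hα.le hlp]
          constructor
          · simpa [abs_of_pos hp0] using hl
          · simp
            positivity
    rw [hset, csInf_Ici]
  · -- lambdaRes = 1/α
    unfold lambdaRes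
    have hset : {l : ℝ | 0 ≤ l ∧ (l • {x : Fin 2 → ℝ | |x 0| ≤ 1 ∧ |x 1| ≤ α} ∩
        ({x : Fin 2 → ℝ | (∃ a : ℤ, x 0 = (a : ℝ)) ∧ (∃ c : ℤ, x 1 = (c : ℝ))} \
        ({x ∈ {x : Fin 2 → ℝ | (∃ a : ℤ, x 0 = (a : ℝ)) ∧ (∃ c : ℤ, x 1 = (c : ℝ))} |
          ∃ c : ℤ, x 1 = 2 * (c : ℝ)} ∪
         {x ∈ {x : Fin 2 → ℝ | (∃ a : ℤ, x 0 = (a : ℝ)) ∧ (∃ c : ℤ, x 1 = (c : ℝ))} |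
          ∃ a : ℤ, x 0 = (p : ℝ) * (a : ℝ)}))).Nonempty} = Set.Ici (1/α) := by
      ext l
      simp only [mem_setOf_eq, mem_Ici]
      constructor
      · rintro ⟨hl0, x, hxK, hxL, hxN⟩
        obtain ⟨⟨a, ha⟩, c, hc⟩ := hxL
        rcases hl0.lt_or_eq with hl | hl
        · rw [memK_aux α l hα.le hl x] at hxK
          obtain ⟨hK0, hK1⟩ := hxK
          have hcz : c ≠ 0 := by
            rintro rfl
            exact hxN (Or.inl ⟨⟨⟨a, ha⟩, ⟨0, hc⟩⟩, ⟨0, by simpa using hc⟩⟩)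
          have h1c : (1:ℝ) ≤ |(c:ℝ)| := by
            rw [← Int.cast_abs]; exact_mod_cast Int.one_le_abs hcz
          rw [hc] at hK1
          rw [div_le_iff₀ hα]
          nlinarith
        · exfalso
          have hx0 : x = 0 := zeroK_aux α hα.le x (by rw [← hl] at hxK; exact hxK)
          subst hx0
          exact hxN (Or.inl ⟨⟨⟨0, by simp⟩, ⟨0, by simp⟩⟩, ⟨0, by simp⟩⟩)
      · intro hl
        have h1α : (1:ℝ) < 1/α := by
          rw [lt_div_iff₀ hα]; nlinarith
        have hlp : 0 < l := lt_of_lt_of_le (by positivity) hl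
        have hl1 : 1 ≤ l := by linarith
        have hlα : 1 ≤ l * α := by
          rw [div_le_iff₀ hα] at hl; linarith
        refine ⟨hlp.le, ![1, 1], ?_, ⟨⟨1, by simp⟩, ⟨1, by simp⟩⟩, ?_⟩
        · rw [memK_aux α l hα.le hlp]
          constructor
          · simpa using hl1
          · simpa using hlα
        · rintro (⟨_, c, hc⟩ | ⟨_, a, ha⟩)
          · simp only [Matrix.cons_val_one, Matrix.head_cons, Matrix.cons_val_zero] at hc
            have : (1:ℤ) = 2 * c := by exact_mod_cast hc
            omega
          · simp only [Matrix.cons_val_zero] at ha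
            have : (1:ℤ) = p * a := by exact_mod_cast ha
            have : (p:ℤ) ∣ 1 := ⟨a, this⟩
            have := Int.le_of_dvd one_pos this
            omega
    rw [hset, csInf_Ici]
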